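/- Let N be an odd natural number. The following map is a bijection from 'Z¹_N onto BP^{(N−1)/2}_{2,0}: each string 2a, …, 2a of ν (necessarily of even length) is replaced by a−1, a+1, …, a−1, a+1 of the same length if the string has odd origin, and by a, a, …, a of the same length if it has even origin; each string 2a+1, …, 2a+1 is replaced by a, a+1, a, a+1, … of the same length if it has odd origin, and by a+1, a, a+1, a, … of the same length if it has even origin. -/

import Mathlib

/-- A sequence of naturals that is eventually zero. -/
def EventuallyZero (l : ℕ → ℕ) : Prop := ∃ N, ∀ m, N ≤ m → l m = 0

/-- A bipartition: eventually zero, with `λ₁ ≥ λ₃ ≥ …` and `λ₂ ≥ λ₄ ≥ …`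
(0-indexed: `l i = λ_{i+1}`). -/
def IsBipartition (l : ℕ → ℕ) : Prop :=
  EventuallyZero l ∧ ∀ i, l (i + 2) ≤ l i

/-- A partition: eventually zero and weakly decreasing. -/
def IsPartitionSeq (l : ℕ → ℕ) : Prop :=
  EventuallyZero l ∧ ∀ i, l (i + 1) ≤ l i

/-- `λ` has excess `(e, e')`: `λᵢ + e ≥ λᵢ₊₁` for odd (paper) `i`,
`λᵢ + e' ≥ λᵢ₊₁` for even (paper) `i`.  With 0-based indices, paper-odd
positions are the even Lean indices. -/
def HasExcess (e e' : ℕ) (l : ℕ → ℕ) : Prop :=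
  ∀ i, (Even i → l (i + 1) ≤ l i + e) ∧ (Odd i → l (i + 1) ≤ l i + e')

/-- The (finite) sum of an eventually zero sequence is `n`. -/
def SumsTo (l : ℕ → ℕ) (n : ℕ) : Prop :=
  ∃ N, (∀ m, N ≤ m → l m = 0) ∧ ∑ i ∈ Finset.range N, l i = n

/-- Starting index of the maximal run (string) of entries equal to `ν i`. -/
noncomputable def strStart (ν : ℕ → ℕ) (i : ℕ) : ℕ := sInf {j | ν j = ν i}

/-- Length of the string of entries equal to `ν i`. -/
noncomputable def strLen (ν : ℕ → ℕ) (i : ℕ) : ℕ := {j | ν j = ν i}.ncard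

/-- Every odd part occurs an even number of times. -/
def OddPartsEvenMult (ν : ℕ → ℕ) : Prop := ∀ c, Odd c → Even ({i | ν i = c}.ncard)

/-- Every even positive part occurs an even number of times. -/
def EvenPartsEvenMult (ν : ℕ → ℕ) : Prop :=
  ∀ c, 0 < c → Even c → Even ({i | ν i = c}.ncard)


/-- The substitution of 3.6(a).  A string has odd origin iff its 1-based starting
index is odd, i.e. its 0-based start strStart is even. -/
noncomputable def T4 (ν : ℕ → ℕ) : ℕ → ℕ := fun i =>
  if ν i = 0 then 0
  else if ν i % 2 = 0 then
    (if strStart ν i % 2 = 0 then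
      (if (i - strStart ν i) % 2 = 0 then ν i / 2 - 1 else ν i / 2 + 1)
     else ν i / 2)
  else
    (if strStart ν i % 2 = 0 then
      (if (i - strStart ν i) % 2 = 0 then ν i / 2 else ν i / 2 + 1)
     else
      (if (i - strStart ν i) % 2 = 0 then ν i / 2 + 1 else ν i / 2))

namespace ZB


def Valid (ν : ℕ → ℕ) : Prop := IsPartitionSeq ν ∧ EvenPartsEvenMult ν

def shiftf (m : ℕ) (f : ℕ → ℕ) : ℕ → ℕ := fun i => f (i + m)

def V (c e q : ℕ) : ℕ :=
  if c = 0 then 0 else if c % 2 = 1 then c / 2 + e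
  else if q = 1 then c / 2 else c / 2 - 1 + 2 * e

noncomputable def T4p (p : ℕ) (ν : ℕ → ℕ) : ℕ → ℕ :=
  fun i => V (ν i) ((i + p) % 2) ((strStart ν i + p) % 2)

-- basic strStart facts
lemma strStart_le (ν : ℕ → ℕ) (i : ℕ) : strStart ν i ≤ i :=
  Nat.sInf_le rfl

lemma apply_strStart (ν : ℕ → ℕ) (i : ℕ) : ν (strStart ν i) = ν i :=
  Nat.sInf_mem (⟨i, rfl⟩ : Set.Nonempty {j | ν j = ν i})

lemma strStart_eq_of_eq {ν : ℕ → ℕ} {i j : ℕ} (h : ν i = ν j) :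
    strStart ν i = strStart ν j := by
  unfold strStart; rw [h]

lemma mono {ν : ℕ → ℕ} (hd : ∀ i, ν (i + 1) ≤ ν i) : ∀ {i j : ℕ}, i ≤ j → ν j ≤ ν i := by
  intro i j h
  induction j with
  | zero => simp_all
  | succ n ih =>
    rcases Nat.eq_or_lt_of_le h with rfl | h'
    · exact le_rfl
    · exact le_trans (hd n) (ih (by omega))

lemma next_start {ν : ℕ → ℕ} (hd : ∀ i, ν (i + 1) ≤ ν i) {i : ℕ}
    (h : ν (i + 1) ≠ ν i) : strStart ν (i + 1) = i + 1 := by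
  have h1 := strStart_le ν (i + 1)
  rcases Nat.eq_or_lt_of_le h1 with h2 | h2
  · exact h2
  · exfalso
    have h3 : ν (strStart ν (i+1)) = ν (i+1) := apply_strStart ν (i+1)
    have h4 : ν i ≤ ν (strStart ν (i+1)) := mono hd (by omega)
    have h5 : ν (i+1) ≤ ν i := hd i
    omega

/-- T4 agrees with the V-form. -/
lemma T4_eq (ν : ℕ → ℕ) : (fun i => (
  if ν i = 0 then 0
  else if ν i % 2 = 0 then
    (if strStart ν i % 2 = 0 then
      (if (i - strStart ν i) % 2 = 0 then ν i / 2 - 1 else ν i / 2 + 1)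
     else ν i / 2)
  else
    (if strStart ν i % 2 = 0 then
      (if (i - strStart ν i) % 2 = 0 then ν i / 2 else ν i / 2 + 1)
     else
      (if (i - strStart ν i) % 2 = 0 then ν i / 2 + 1 else ν i / 2)) : ℕ))
    = T4p 0 ν := by
  funext i
  have h1 := strStart_le ν i
  unfold T4p V
  split_ifs <;> omega


lemma V_excess0 {c c' q q' : ℕ} (h : c' ≤ c) : V c' 1 q' ≤ V c 0 q + 2 := by
  unfold V; split_ifs <;> omega

lemma V_excess1 {c c' q q' : ℕ} (h : c' ≤ c) : V c' 0 q' ≤ V c 1 q := by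
  unfold V; split_ifs <;> omega

lemma V_bip {c c'' e q q'' : ℕ} (he : e ≤ 1) (h : c'' ≤ c) (hq : c'' = c → q'' = q) :
    V c'' e q'' ≤ V c e q := by
  unfold V; split_ifs <;> omega

section shiftsec
variable {ν : ℕ → ℕ} {c m : ℕ}
  (Hstr : ∀ j, j < m → ν j = c) (Hlt : ∀ i, ν (m + i) < c)

include Hstr Hlt in
lemma strStart_shift (i : ℕ) :
    strStart ν (i + m) = strStart (shiftf m ν) i + m := by
  set B := {j | shiftf m ν j = shiftf m ν i} with hB
  have hiB : i ∈ B := rfl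
  set k := sInf B with hk
  have hkB : k ∈ B := Nat.sInf_mem ⟨i, hiB⟩
  have hmem : ν (k + m) = ν (i + m) := hkB
  have hkeq : strStart (shiftf m ν) i = k := rfl
  apply le_antisymm
  · exact le_trans (Nat.sInf_le hmem) (by omega)
  · set S := strStart ν (i + m) with hS
    have hSv : ν S = ν (i + m) := apply_strStart ν (i + m)
    have hco : ν (i + m) = ν (m + i) := by rw [Nat.add_comm]
    have hSm : m ≤ S := by
      by_contra h
      have := Hstr S (by omega)
      have := Hlt i
      omega
    have : (S - m) ∈ B := by
      show ν (S - m + m) = ν (i + m)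
      rw [Nat.sub_add_cancel hSm]; exact hSv
    have := Nat.sInf_le this
    omega

include Hstr Hlt in
lemma T4p_shift (p i : ℕ) :
    T4p p ν (i + m) = T4p (p + m) (shiftf m ν) i := by
  have h := strStart_shift Hstr Hlt i
  show V (ν (i + m)) _ _ = V (ν (i + m)) _ _
  rw [h]
  congr 1 <;> omega

include Hstr Hlt in
lemma T4p_prefix (p : ℕ) {i : ℕ} (hi : i < m) :
    T4p p ν i = V c ((i + p) % 2) (p % 2) := by
  have hi0 : ν i = ν 0 := by rw [Hstr i hi, Hstr 0 (by omega)]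
  have h0 : strStart ν i = 0 := by
    have : strStart ν i = strStart ν 0 := by unfold strStart; rw [hi0]
    have := strStart_le ν 0
    omega
  show V (ν i) _ _ = _
  rw [Hstr i hi, h0, Nat.zero_add]

include Hstr Hlt in
lemma valid_shift (hv : Valid ν) : Valid (shiftf m ν) := by
  obtain ⟨⟨⟨B, hB⟩, hdec⟩, hmult⟩ := hv
  refine ⟨⟨⟨B, fun j hj => hB (j + m) (by omega)⟩, fun i => by simpa [shiftf, Nat.add_right_comm] using hdec (i + m)⟩, ?_⟩
  intro d hd hde
  rcases lt_or_ge d c with hdc | hdc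
  · have hset : {j | ν j = d} = (· + m) '' {i | shiftf m ν i = d} := by
      ext j
      constructor
      · intro hj
        have hjm : m ≤ j := by
          by_contra h
          have := Hstr j (by omega)
          simp only [Set.mem_setOf_eq] at hj
          omega
        exact ⟨j - m, by simpa [shiftf, Nat.sub_add_cancel hjm] using hj,
          Nat.sub_add_cancel hjm⟩
      · rintro ⟨i, hi, rfl⟩
        exact hi
    have := hmult d hd hde
    rwa [hset, Set.ncard_image_of_injective _ (add_left_injective m)] at this
  · have hset : {i | shiftf m ν i = d} = ∅ := by
      ext i
      simp only [Set.mem_setOf_eq, Set.mem_empty_iff_false, iff_false]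
      have := Hlt i
      show ¬ ν (i + m) = d
      rw [Nat.add_comm]
      omega
    rw [hset]
    simp

end shiftsec

def gluef (c m : ℕ) (ν' : ℕ → ℕ) : ℕ → ℕ := fun i => if i < m then c else ν' (i - m)

lemma gluef_str (c m : ℕ) (ν' : ℕ → ℕ) : ∀ j, j < m → gluef c m ν' j = c := by
  intro j hj; simp [gluef, hj]

lemma gluef_shift (c m : ℕ) (ν' : ℕ → ℕ) : shiftf m (gluef c m ν') = ν' := by
  funext i; simp [shiftf, gluef]

lemma gluef_lt {c m : ℕ} {ν' : ℕ → ℕ} (hlt : ∀ i, ν' i < c) :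
    ∀ i, gluef c m ν' (m + i) < c := by
  intro i
  simp only [gluef, if_neg (by omega : ¬ m + i < m)]
  have h : m + i - m = i := by omega
  rw [h]
  exact hlt i

lemma ncard_Iio (m : ℕ) : (Set.Iio m).ncard = m := by
  rw [← Finset.coe_range, Set.ncard_coe_finset, Finset.card_range]

lemma valid_glue {c m : ℕ} {ν' : ℕ → ℕ} (hv' : Valid ν') (hlt : ∀ i, ν' i < c)
    (hm : 1 ≤ m) (hev : c % 2 = 0 → Even m) : Valid (gluef c m ν') := by
  obtain ⟨⟨⟨B, hB⟩, hdec⟩, hmult⟩ := hv'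
  refine ⟨⟨⟨B + m, fun j hj => ?_⟩, fun i => ?_⟩, ?_⟩
  · have h1 : ¬ j < m := by omega
    simp only [gluef, if_neg h1]
    exact hB (j - m) (by omega)
  · rcases lt_or_ge (i+1) m with h | h
    · simp [gluef, h, show i < m by omega]
    · rcases lt_or_ge i m with h2 | h2
      · have : i + 1 - m = 0 := by omega
        simp only [gluef, if_neg (by omega : ¬ i + 1 < m), if_pos h2, this]
        exact le_of_lt (hlt 0)
      · simp only [gluef, if_neg (by omega : ¬ i + 1 < m), if_neg (by omega : ¬ i < m)]
        have : i + 1 - m = (i - m) + 1 := by omega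
        rw [this]
        exact hdec (i - m)
  · intro d hd hde
    rcases eq_or_ne d c with rfl | hne
    · have hset : {i | gluef d m ν' i = d} = Set.Iio m := by
        ext j
        simp only [Set.mem_setOf_eq, gluef, Set.mem_Iio]
        split_ifs with h
        · simpa using h
        · have := hlt (j - m); constructor <;> intro <;> omega
      rw [hset, ncard_Iio]
      exact hev (Nat.even_iff.mp hde)
    · have hset : {i | gluef c m ν' i = d} = (· + m) '' {i | ν' i = d} := by
        ext j
        simp only [Set.mem_setOf_eq, gluef, Set.mem_image]
        split_ifs with h
        · constructor
          · intro h2; exact absurd h2.symm hne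
          · rintro ⟨i, hi, rfl⟩; omega
        · constructor
          · intro h2; exact ⟨j - m, h2, by omega⟩
          · rintro ⟨i, hi, hij⟩
            have : j - m = i := by omega
            rw [this]; exact hi
      rw [hset, Set.ncard_image_of_injective _ (add_left_injective m)]
      exact hmult d hd hde


lemma sumsTo_all {f : ℕ → ℕ} {n : ℕ} (h : SumsTo f n) :
    ∃ N, (∀ m, N ≤ m → f m = 0) ∧ ∀ K, N ≤ K → ∑ i ∈ Finset.range K, f i = n := by
  obtain ⟨N, h0, hs⟩ := h
  refine ⟨N, h0, fun K hK => ?_⟩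
  rw [← hs]
  symm
  apply Finset.sum_subset (Finset.range_subset_range.2 hK)
  intro x hx hnx
  exact h0 x (by simp at hnx; omega)

lemma sumsTo_unique {f : ℕ → ℕ} {a b : ℕ} (ha : SumsTo f a) (hb : SumsTo f b) : a = b := by
  obtain ⟨N, _, hs⟩ := sumsTo_all ha
  obtain ⟨M, _, ht⟩ := sumsTo_all hb
  rw [← hs (N + M) (by omega), ← ht (N + M) (by omega)]

lemma sumsTo_concat {f : ℕ → ℕ} {m A B : ℕ} (hA : ∑ i ∈ Finset.range m, f i = A)
    (hB : SumsTo (shiftf m f) B) : SumsTo f (A + B) := by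
  obtain ⟨N, h0, hs⟩ := hB
  refine ⟨m + N, fun j hj => ?_, ?_⟩
  · have := h0 (j - m) (by omega)
    simpa [shiftf, Nat.sub_add_cancel (show m ≤ j by omega)] using this
  · rw [Finset.sum_range_add, hA]
    congr 1
    rw [← hs]
    apply Finset.sum_congr rfl
    intro x _
    simp [shiftf, Nat.add_comm]

lemma sumsTo_strip {f : ℕ → ℕ} {m T A : ℕ} (hT : SumsTo f T)
    (hA : ∑ i ∈ Finset.range m, f i = A) :
    A ≤ T ∧ SumsTo (shiftf m f) (T - A) := by
  obtain ⟨N, h0, hs⟩ := sumsTo_all hT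
  have key : ∑ i ∈ Finset.range (m + N), f i = T := hs _ (by omega)
  rw [Finset.sum_range_add, hA] at key
  constructor
  · omega
  · refine ⟨N, fun j hj => by simpa [shiftf, Nat.add_comm] using h0 (m + j) (by omega), ?_⟩
    have : ∑ i ∈ Finset.range N, f (m + i) = ∑ i ∈ Finset.range N, shiftf m f i := by
      apply Finset.sum_congr rfl
      intro x _
      simp [shiftf, Nat.add_comm]
    omega

lemma sum_mod2 (p : ℕ) : ∀ m, ∑ i ∈ Finset.range m, (i + p) % 2 = (m + p % 2) / 2 := by
  intro m
  induction m with
  | zero => simp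
  | succ n ih => rw [Finset.sum_range_succ, ih]; omega

lemma sumsTo_zero {f : ℕ → ℕ} (h : SumsTo f 0) : ∀ i, f i = 0 := by
  obtain ⟨N, h0, hs⟩ := h
  intro i
  rcases lt_or_ge i N with hi | hi
  · exact Finset.sum_eq_zero_iff.mp hs i (Finset.mem_range.2 hi)
  · exact h0 i hi


lemma sum_V_odd {c : ℕ} (p m : ℕ) (hc : c % 2 = 1) :
    ∑ i ∈ Finset.range m, V c ((i + p) % 2) (p % 2) = (c / 2) * m + (m + p % 2) / 2 := by
  have h : ∀ i, V c ((i + p) % 2) (p % 2) = c / 2 + (i + p) % 2 := by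
    intro i; unfold V; split_ifs <;> omega
  calc ∑ i ∈ Finset.range m, V c ((i + p) % 2) (p % 2)
      = ∑ i ∈ Finset.range m, (c / 2 + (i + p) % 2) := Finset.sum_congr rfl (fun i _ => h i)
    _ = m * (c / 2) + ∑ i ∈ Finset.range m, (i + p) % 2 := by
        rw [Finset.sum_add_distrib, Finset.sum_const, Finset.card_range, smul_eq_mul]
    _ = (c / 2) * m + (m + p % 2) / 2 := by rw [sum_mod2, Nat.mul_comm]

lemma sum_V_even {c : ℕ} (p m : ℕ) (hc : c % 2 = 0) (hc0 : c ≠ 0) (hm : m % 2 = 0) :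
    ∑ i ∈ Finset.range m, V c ((i + p) % 2) (p % 2) = (c / 2) * m := by
  rcases Nat.eq_or_lt_of_le (Nat.zero_le (p % 2)) with hp | hp
  · have h : ∀ i, V c ((i + p) % 2) (p % 2) = c / 2 - 1 + 2 * ((i + p) % 2) := by
      intro i; unfold V; split_ifs <;> omega
    have h2 : c / 2 - 1 + 1 = c / 2 := by omega
    calc ∑ i ∈ Finset.range m, V c ((i + p) % 2) (p % 2)
        = ∑ i ∈ Finset.range m, (c / 2 - 1 + 2 * ((i + p) % 2)) :=
          Finset.sum_congr rfl (fun i _ => h i)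
      _ = m * (c / 2 - 1) + 2 * ∑ i ∈ Finset.range m, (i + p) % 2 := by
          rw [Finset.sum_add_distrib, Finset.sum_const, Finset.card_range, smul_eq_mul,
            Finset.mul_sum]
      _ = m * (c / 2 - 1) + m := by rw [sum_mod2]; omega
      _ = (c / 2) * m := by
          obtain ⟨k, hk⟩ : ∃ k, c / 2 = k + 1 := ⟨c / 2 - 1, by omega⟩
          rw [hk, Nat.add_sub_cancel]; ring
  · have h : ∀ i, V c ((i + p) % 2) (p % 2) = c / 2 := by
      intro i; unfold V; split_ifs <;> omega
    calc ∑ i ∈ Finset.range m, V c ((i + p) % 2) (p % 2)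
        = ∑ i ∈ Finset.range m, (c / 2) := Finset.sum_congr rfl (fun i _ => h i)
      _ = (c / 2) * m := by rw [Finset.sum_const, Finset.card_range, smul_eq_mul, Nat.mul_comm]

lemma string_decomp {ν : ℕ → ℕ} (hv : Valid ν) (hne : ν 0 ≠ 0) :
    ∃ m, 0 < m ∧ (∀ j, j < m → ν j = ν 0) ∧ (∀ i, ν (m + i) < ν 0) ∧
      (ν 0 % 2 = 0 → m % 2 = 0) := by
  obtain ⟨⟨⟨B, hB⟩, hdec⟩, hmult⟩ := hv
  have hBne : ν B ≠ ν 0 := by rw [hB B le_rfl]; exact fun h => hne h.symm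
  set m := sInf {j | ν j ≠ ν 0} with hm
  have hmem : m ∈ {j | ν j ≠ ν 0} := Nat.sInf_mem ⟨B, hBne⟩
  rw [Set.mem_setOf_eq] at hmem
  have Hstr : ∀ j, j < m → ν j = ν 0 := by
    intro j hj
    by_contra h
    have h2 : m ≤ j := Nat.sInf_le h
    omega
  have hm0 : 0 < m := by
    rcases Nat.eq_zero_or_pos m with h | h
    · exact absurd (h ▸ hmem) (by simp)
    · exact h
  have Hlt : ∀ i, ν (m + i) < ν 0 := by
    intro i
    have h1 : ν (m + i) ≤ ν m := mono hdec (by omega)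
    have h2 : ν m ≤ ν 0 := mono hdec (by omega)
    omega
  refine ⟨m, hm0, Hstr, Hlt, fun hc => ?_⟩
  have hset : {i | ν i = ν 0} = Set.Iio m := by
    ext j
    simp only [Set.mem_setOf_eq, Set.mem_Iio]
    constructor
    · intro hj
      by_contra h
      have := Hlt (j - m)
      rw [show m + (j - m) = j by omega] at this
      omega
    · exact Hstr j
  have := hmult (ν 0) (by omega) (Nat.even_iff.2 hc)
  rw [hset, ncard_Iio] at this
  exact Nat.even_iff.1 this

/-- The image satisfies the chain conditions, pointwise. -/
lemma L1cond {ν : ℕ → ℕ} (hv : Valid ν) (p : ℕ) :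
    (∀ i, T4p p ν (i + 2) ≤ T4p p ν i) ∧
    (∀ i, ((i + p) % 2 = 0 → T4p p ν (i + 1) ≤ T4p p ν i + 2) ∧
          ((i + p) % 2 = 1 → T4p p ν (i + 1) ≤ T4p p ν i)) := by
  have hdec := hv.1.2
  constructor
  · intro i
    show V _ _ _ ≤ V _ _ _
    have h2 : ν (i + 2) ≤ ν i := mono hdec (by omega)
    have he : (i + 2 + p) % 2 = (i + p) % 2 := by omega
    rw [he]
    apply V_bip (by omega) h2
    intro hcc
    have : strStart ν (i + 2) = strStart ν i := strStart_eq_of_eq hcc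
    rw [this]
  · intro i
    have h1 : ν (i + 1) ≤ ν i := hdec i
    constructor
    · intro he
      have he1 : (i + 1 + p) % 2 = 1 := by omega
      show V _ _ _ ≤ V _ _ _ + 2
      rw [he, he1]
      exact V_excess0 h1
    · intro he
      have he1 : (i + 1 + p) % 2 = 0 := by omega
      show V _ _ _ ≤ V _ _ _
      rw [he, he1]
      exact V_excess1 h1

lemma T4p_zero {ν : ℕ → ℕ} {i : ℕ} (h : ν i = 0) (p : ℕ) : T4p p ν i = 0 := by
  show V _ _ _ = 0
  rw [h]
  rfl

lemma L1sum : ∀ N p (ν : ℕ → ℕ), Valid ν → SumsTo ν N →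
    SumsTo (T4p p ν) ((N + p % 2) / 2) := by
  intro N
  induction N using Nat.strong_induction_on with
  | _ N ih =>
    intro p ν hv hs
    rcases eq_or_ne (ν 0) 0 with hz | hz
    · have hall : ∀ i, ν i = 0 := fun i => by
        have := mono hv.1.2 (Nat.zero_le i); omega
      have hN : N = 0 := sumsTo_unique hs ⟨0, fun m _ => hall m, rfl⟩
      have : (N + p % 2) / 2 = 0 := by omega
      rw [this]
      exact ⟨0, fun m _ => T4p_zero (hall m) p, rfl⟩
    · obtain ⟨m, hm0, Hstr, Hlt, hmev⟩ := string_decomp hv hz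
      set c := ν 0 with hc
      -- prefix sum of ν
      have hpre : ∑ i ∈ Finset.range m, ν i = c * m := by
        rw [Finset.sum_congr rfl (fun i hi => Hstr i (Finset.mem_range.1 hi)),
          Finset.sum_const, Finset.card_range, smul_eq_mul, Nat.mul_comm]
      obtain ⟨hle, hstrip⟩ := sumsTo_strip hs hpre
      have hvs : Valid (shiftf m ν) := valid_shift Hstr Hlt hv
      have hlt : N - c * m < N := by
        have : 1 ≤ c * m := Nat.one_le_iff_ne_zero.2 (by positivity)
        omega
      have ihs := ih (N - c * m) hlt (p + m) (shiftf m ν) hvs hstrip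
      -- image prefix sum
      have himg : ∑ i ∈ Finset.range m, T4p p ν i
          = ∑ i ∈ Finset.range m, V c ((i + p) % 2) (p % 2) :=
        Finset.sum_congr rfl (fun i hi => T4p_prefix Hstr Hlt p (Finset.mem_range.1 hi))
      have hshift : shiftf m (T4p p ν) = T4p (p + m) (shiftf m ν) := by
        funext i
        exact T4p_shift Hstr Hlt p i
      have hcombine := sumsTo_concat (f := T4p p ν) himg (hshift ▸ ihs)
      have harith : ∑ i ∈ Finset.range m, V c ((i + p) % 2) (p % 2)
          + (N - c * m + (p + m) % 2) / 2 = (N + p % 2) / 2 := by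
        rcases Nat.even_or_odd c with hce | hco
        · have hce' : c % 2 = 0 := Nat.even_iff.1 hce
          rw [sum_V_even p m hce' (by omega) (hmev hce')]
          have hK : 2 * ((c / 2) * m) = c * m := by
            have h1 : c = 2 * (c / 2) := by omega
            calc 2 * ((c / 2) * m) = (2 * (c / 2)) * m := by ring
              _ = c * m := by rw [← h1]
          have hmE : m % 2 = 0 := hmev hce'
          set K := (c / 2) * m
          set CM := c * m
          omega
        · have hco' : c % 2 = 1 := Nat.odd_iff.1 hco
          rw [sum_V_odd p m hco']
          have hK : 2 * ((c / 2) * m) + m = c * m := by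
            have h1 : c = 2 * (c / 2) + 1 := by omega
            calc 2 * ((c / 2) * m) + m = (2 * (c / 2) + 1) * m := by ring
              _ = c * m := by rw [← h1]
          set K := (c / 2) * m
          set CM := c * m
          omega
      rwa [harith] at hcombine

lemma break_odd {c d e q0 : ℕ} (hc : c % 2 = 1) (h3 : 3 ≤ c) (hd : d < c)
    (he : e ≤ 1) (hq : q0 ≤ 1) : V d e e < V c e q0 := by
  unfold V; split_ifs <;> omega

lemma break_even {c d e q0 x d2 : ℕ} (hc : c % 2 = 0) (hd : d < c) (he : e ≤ 1)
    (hq : q0 ≤ 1) (hcoin : V d e e = V c e q0)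
    (hx : x = V d (1 - e) e ∨ (d2 < d ∧ x = V d2 (1 - e) (1 - e))) :
    x ≠ V c (1 - e) q0 := by
  rcases hx with hx | ⟨hd2, hx⟩ <;> subst hx <;> unfold V at hcoin ⊢ <;>
    split_ifs at hcoin ⊢ <;> omega

lemma decode_c {q0 c c' x y d d' : ℕ} (hq : q0 ≤ 1) (hc : 1 ≤ c) (hc' : 1 ≤ c')
    (h0 : V c q0 q0 = V c' q0 q0)
    (hx : x = V c (1 - q0) q0 ∨ (c % 2 = 1 ∧ d < c ∧ x = V d (1 - q0) (1 - q0)))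
    (hy : y = V c' (1 - q0) q0 ∨ (c' % 2 = 1 ∧ d' < c' ∧ y = V d' (1 - q0) (1 - q0)))
    (hxy : x = y) : c = c' := by
  rcases hx with hx | ⟨hco, hd, hx⟩ <;> rcases hy with hy | ⟨hco', hd', hy⟩ <;>
    subst hx <;> subst hy <;> unfold V at * <;> split_ifs at * <;> omega

lemma T4p_break {ν : ℕ → ℕ} {c m : ℕ} (hdec : ∀ i, ν (i + 1) ≤ ν i)
    (Hstr : ∀ j, j < m → ν j = c) (hm0 : 0 < m) (hne : ν m ≠ c) (p : ℕ) :
    T4p p ν m = V (ν m) ((m + p) % 2) ((m + p) % 2) := by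
  have h1 : ν (m - 1 + 1) ≠ ν (m - 1) := by
    rw [Hstr (m - 1) (by omega), show m - 1 + 1 = m by omega]
    exact hne
  have h2 := next_start hdec h1
  rw [show m - 1 + 1 = m by omega] at h2
  show V _ _ _ = _
  rw [h2]

lemma strStart_run {ν : ℕ → ℕ} {m : ℕ} (hdec : ∀ i, ν (i + 1) ≤ ν i)
    (hS : strStart ν m = m) (heq : ν (m + 1) = ν m) : strStart ν (m + 1) = m := by
  rw [strStart_eq_of_eq heq, hS]

lemma ones_char {ν : ℕ → ℕ} {N : ℕ} (hv : Valid ν) (hs : SumsTo ν N) (h1 : ν 0 = 1) :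
    ∀ i, ν i = if i < N then 1 else 0 := by
  obtain ⟨m, hm0, Hstr, Hlt, _⟩ := string_decomp hv (by omega)
  rw [h1] at Hstr Hlt
  have hzero : ∀ j, m ≤ j → ν j = 0 := by
    intro j hj
    have := Hlt (j - m)
    rw [show m + (j - m) = j by omega] at this
    omega
  have hsm : SumsTo ν m := by
    refine ⟨m, hzero, ?_⟩
    rw [Finset.sum_congr rfl (fun i hi => Hstr i (Finset.mem_range.1 hi))]
    simp
  have hNm : N = m := sumsTo_unique hs hsm
  intro i
  rcases lt_or_ge i N with h | h
  · rw [if_pos h]; exact Hstr i (by omega)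
  · rw [if_neg (by omega)]; exact hzero i (by omega)

lemma no_extend {p c : ℕ} {ν ν' : ℕ → ℕ} {m m' : ℕ}
    (hv : Valid ν) (hc2 : 2 ≤ c)
    (H1 : ∀ j, j < m → ν j = c) (H2 : ∀ i, ν (m + i) < c) (hm0 : 0 < m)
    (hmev : c % 2 = 0 → m % 2 = 0)
    (H1' : ∀ j, j < m' → ν' j = c) (H2' : ∀ i, ν' (m' + i) < c)
    (hm'ev : c % 2 = 0 → m' % 2 = 0)
    (heq : T4p p ν = T4p p ν')
    (hlt : m < m') : False := by
  have hdec := hv.1.2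
  set em := (m + p) % 2 with hem
  set q0 := p % 2 with hq0
  have hd : ν m < c := by have := H2 0; rwa [Nat.add_zero] at this
  have hlhs : T4p p ν m = V (ν m) em em :=
    T4p_break hdec H1 hm0 (by omega) p
  have hrhs : T4p p ν' m = V c em q0 := T4p_prefix H1' H2' p hlt
  have hVeq : V (ν m) em em = V c em q0 := by
    rw [← hlhs, ← hrhs, heq]
  rcases Nat.even_or_odd c with hce | hco
  · -- c even
    have hce' : c % 2 = 0 := Nat.even_iff.1 hce
    have hmE := hmev hce'
    have hm'E := hm'ev hce'
    have hm1 : m + 1 < m' := by omega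
    have hrhs1 : T4p p ν' (m + 1) = V c (1 - em) q0 := by
      have := T4p_prefix H1' H2' p hm1
      rwa [show (m + 1 + p) % 2 = 1 - em by omega] at this
    have hSm : strStart ν m = m := by
      have h1 : ν (m - 1 + 1) ≠ ν (m - 1) := by
        rw [H1 (m - 1) (by omega), show m - 1 + 1 = m by omega]; omega
      have h2 := next_start hdec h1
      rwa [show m - 1 + 1 = m by omega] at h2
    have hx : T4p p ν (m + 1) = V (ν m) (1 - em) em ∨
        (ν (m + 1) < ν m ∧ T4p p ν (m + 1) = V (ν (m + 1)) (1 - em) (1 - em)) := by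
      rcases eq_or_lt_of_le (hdec m) with h | h
      · left
        have hS := strStart_run hdec hSm h
        show V _ _ _ = _
        rw [hS, h, show (m + 1 + p) % 2 = 1 - em by omega]
      · right
        refine ⟨h, ?_⟩
        have hS : strStart ν (m + 1) = m + 1 := next_start hdec (by omega)
        show V _ _ _ = _
        rw [hS, show (m + 1 + p) % 2 = 1 - em by omega]
    have hres := break_even (x := T4p p ν (m + 1)) (d2 := ν (m + 1)) hce' hd
      (by omega) (by omega) hVeq
      (by rcases hx with h | ⟨h1, h2⟩
          · exact Or.inl h
          · exact Or.inr ⟨h1, h2⟩)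
    exact hres (by rw [heq, hrhs1])
  · have hco' : c % 2 = 1 := Nat.odd_iff.1 hco
    have := break_odd (d := ν m) (e := em) (q0 := q0) hco' (by omega) hd (by omega) (by omega)
    omega

lemma L2 : ∀ N p (ν ν' : ℕ → ℕ), Valid ν → Valid ν' → SumsTo ν N → SumsTo ν' N →
    T4p p ν = T4p p ν' → ν = ν' := by
  intro N
  induction N using Nat.strong_induction_on with
  | _ N ih =>
    intro p ν ν' hv hv' hs hs' heq
    rcases eq_or_ne N 0 with rfl | hN0
    · funext i
      rw [sumsTo_zero hs i, sumsTo_zero hs' i]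
    · have hz : ν 0 ≠ 0 := by
        intro h
        have hall : ∀ i, ν i = 0 := fun i => by have := mono hv.1.2 (Nat.zero_le i); omega
        exact hN0 (sumsTo_unique hs ⟨0, fun m _ => hall m, rfl⟩)
      have hz' : ν' 0 ≠ 0 := by
        intro h
        have hall : ∀ i, ν' i = 0 := fun i => by have := mono hv'.1.2 (Nat.zero_le i); omega
        exact hN0 (sumsTo_unique hs' ⟨0, fun m _ => hall m, rfl⟩)
      obtain ⟨m, hm0, H1, H2, hmev⟩ := string_decomp hv hz
      obtain ⟨m', hm'0, H1', H2', hm'ev⟩ := string_decomp hv' hz'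
      set c := ν 0 with hc
      set c' := ν' 0 with hc'
      set q0 := p % 2 with hq0
      -- value at 0
      have h00 : T4p p ν 0 = V c q0 q0 := by
        have := T4p_prefix H1 H2 p hm0
        rwa [show (0 + p) % 2 = q0 by omega] at this
      have h00' : T4p p ν' 0 = V c' q0 q0 := by
        have := T4p_prefix H1' H2' p hm'0
        rwa [show (0 + p) % 2 = q0 by omega] at this
      -- value at 1, two shapes
      have h1shape : T4p p ν 1 = V c (1 - q0) q0 ∨
          (c % 2 = 1 ∧ ν 1 < c ∧ T4p p ν 1 = V (ν 1) (1 - q0) (1 - q0)) := by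
        rcases lt_or_ge 1 m with h | h
        · left
          have := T4p_prefix H1 H2 p h
          rwa [show (1 + p) % 2 = 1 - q0 by omega] at this
        · have hm1 : m = 1 := by omega
          have hcodd : c % 2 = 1 := by
            by_contra hcE
            have := hmev (by omega)
            omega
          right
          refine ⟨hcodd, by have := H2 0; rw [hm1] at this; simpa using this, ?_⟩
          have := T4p_break hv.1.2 H1 hm0 (by have := H2 0; rw [Nat.add_zero] at this; omega) p
          rw [hm1] at this
          rwa [show (1 + p) % 2 = 1 - q0 by omega] at this
      have h1shape' : T4p p ν' 1 = V c' (1 - q0) q0 ∨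
          (c' % 2 = 1 ∧ ν' 1 < c' ∧ T4p p ν' 1 = V (ν' 1) (1 - q0) (1 - q0)) := by
        rcases lt_or_ge 1 m' with h | h
        · left
          have := T4p_prefix H1' H2' p h
          rwa [show (1 + p) % 2 = 1 - q0 by omega] at this
        · have hm1 : m' = 1 := by omega
          have hcodd : c' % 2 = 1 := by
            by_contra hcE
            have := hm'ev (by omega)
            omega
          right
          refine ⟨hcodd, by have := H2' 0; rw [hm1] at this; simpa using this, ?_⟩
          have := T4p_break hv'.1.2 H1' hm'0 (by have := H2' 0; rw [Nat.add_zero] at this; omega) p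
          rw [hm1] at this
          rwa [show (1 + p) % 2 = 1 - q0 by omega] at this
      have hcc : c = c' := by
        apply decode_c (q0 := q0) (x := T4p p ν 1) (y := T4p p ν' 1)
          (d := ν 1) (d' := ν' 1) (by omega) (by omega) (by omega)
        · rw [← h00, ← h00', heq]
        · exact h1shape
        · exact h1shape'
        · rw [heq]
      rw [← hcc] at H1' H2' hm'ev
      rcases eq_or_ne c 1 with hc1 | hc1
      · -- all ones
        funext i
        rw [ones_char hv hs (by omega) i, ones_char hv' hs' (by rw [← hc', ← hcc]; omega) i]
      · have hc2 : 2 ≤ c := by omega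
        have hmm : m = m' := by
          rcases lt_trichotomy m m' with h | h | h
          · exact absurd (no_extend hv hc2 H1 H2 hm0 hmev H1' H2' hm'ev heq h) id
          · exact h
          · exact absurd (no_extend hv' hc2 H1' H2' hm'0 hm'ev H1 H2 hmev heq.symm h) id
        subst hmm
        -- strip
        have hpreν : ∑ i ∈ Finset.range m, ν i = c * m := by
          rw [Finset.sum_congr rfl (fun i hi => H1 i (Finset.mem_range.1 hi)),
            Finset.sum_const, Finset.card_range, smul_eq_mul, Nat.mul_comm]
        have hpreν' : ∑ i ∈ Finset.range m, ν' i = c * m := by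
          rw [Finset.sum_congr rfl (fun i hi => H1' i (Finset.mem_range.1 hi)),
            Finset.sum_const, Finset.card_range, smul_eq_mul, Nat.mul_comm]
        obtain ⟨hle, hstrip⟩ := sumsTo_strip hs hpreν
        obtain ⟨hle', hstrip'⟩ := sumsTo_strip hs' hpreν'
        have hshift_eq : T4p (p + m) (shiftf m ν) = T4p (p + m) (shiftf m ν') := by
          funext i
          rw [← T4p_shift H1 H2 p i, ← T4p_shift H1' H2' p i, heq]
        have hless : N - c * m < N := by
          have : 1 ≤ c * m := Nat.one_le_iff_ne_zero.2 (by positivity)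
          omega
        have hIH := ih (N - c * m) hless (p + m) (shiftf m ν) (shiftf m ν')
          (valid_shift H1 H2 hv) (valid_shift H1' H2' hv') hstrip hstrip' hshift_eq
        funext i
        rcases lt_or_ge i m with h | h
        · rw [H1 i h, H1' i h]
        · have := congrFun hIH (i - m)
          simp only [shiftf] at this
          rwa [show i - m + m = i by omega] at this

def cmax (p a b : ℕ) : ℕ :=
  if p % 2 = 0 then (if b = a + 2 then 2 * a + 2 else 2 * a + 1)
  else (if b = a then 2 * a else 2 * a - 1)

lemma cmax_spec (p a b : ℕ) (hab : ¬(a = 0 ∧ b = 0))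
    (hex0 : ((0 + p) % 2 = 0 → b ≤ a + 2) ∧ ((0 + p) % 2 = 1 → b ≤ a)) :
    1 ≤ cmax p a b ∧ V (cmax p a b) (p % 2) (p % 2) = a ∧
      b ≤ V (cmax p a b) ((1 + p) % 2) (p % 2) ∧
      (cmax p a b % 2 = 0 → b = V (cmax p a b) ((1 + p) % 2) (p % 2)) := by
  obtain ⟨h1, h2⟩ := hex0
  rcases (by omega : p % 2 = 0 ∨ p % 2 = 1) with hp | hp
  · have hb := h1 (by omega)
    unfold cmax V
    split_ifs <;> first | omega | (exfalso; assumption)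
  · have hb := h2 (by omega)
    unfold cmax V
    split_ifs <;> first | omega | (exfalso; assumption)

lemma cmax_le_even {p a b : ℕ} (hp : p % 2 = 0) : cmax p a b ≤ 2 * a + 2 := by
  unfold cmax; split_ifs <;> omega

lemma cmax_le_odd {p a b : ℕ} (hp : p % 2 = 1) : cmax p a b ≤ 2 * a := by
  unfold cmax; split_ifs <;> omega

lemma chain2 {l : ℕ → ℕ} (hbip : ∀ i, l (i + 2) ≤ l i) :
    ∀ t i, l (i + 2 * t) ≤ l i := by
  intro t
  induction t with
  | zero => intro i; simp
  | succ n ihn =>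
    intro i
    have h1 := hbip (i + 2 * n)
    have h2 := ihn i
    calc l (i + 2 * (n + 1)) = l (i + 2 * n + 2) := by ring_nf
      _ ≤ l (i + 2 * n) := h1
      _ ≤ l i := h2

lemma valid_zero : Valid (fun _ => 0) := by
  refine ⟨⟨⟨0, fun _ _ => rfl⟩, fun _ => le_rfl⟩, fun c hc _ => ?_⟩
  have : {i : ℕ | (fun _ => 0) i = c} = ∅ := by
    ext i; simp; omega
  rw [this]; simp

def onesf (M : ℕ) : ℕ → ℕ := fun i => if i < M then 1 else 0

lemma valid_ones (M : ℕ) : Valid (onesf M) := by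
  refine ⟨⟨⟨M, fun j hj => by simp [onesf]; omega⟩, fun i => ?_⟩, fun c hc hce => ?_⟩
  · simp only [onesf]; split_ifs <;> omega
  · have hc1 : c ≠ 1 := by rintro rfl; simp at hce
    have : {i : ℕ | onesf M i = c} = ∅ := by
      ext i; simp only [onesf, Set.mem_setOf_eq, Set.mem_empty_iff_false, iff_false]
      split_ifs <;> omega
    rw [this]; simp

lemma ones_str (M : ℕ) : ∀ j, j < M → onesf M j = 1 := fun j hj => by simp [onesf, hj]

lemma ones_lt (M : ℕ) : ∀ i, onesf M (M + i) < 1 := fun i => by simp [onesf]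

lemma V_one (e q : ℕ) : V 1 e q = e := by unfold V; norm_num

lemma L3 : ∀ s p (l : ℕ → ℕ),
    (∀ i, l (i + 2) ≤ l i) →
    (∀ i, ((i + p) % 2 = 0 → l (i + 1) ≤ l i + 2) ∧ ((i + p) % 2 = 1 → l (i + 1) ≤ l i)) →
    SumsTo l s →
    ∃ ν, Valid ν ∧ SumsTo ν (2 * s + 1 - p % 2) ∧ T4p p ν = l ∧
      ν 0 ≤ cmax p (l 0) (l 1) := by
  intro s
  induction s using Nat.strong_induction_on with
  | _ s ih =>
    intro p l hbip hex hs
    by_cases h00 : l 0 = 0 ∧ l 1 = 0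
    · -- base : l is identically zero
      have hall : ∀ i, l i = 0 := by
        intro i
        rcases Nat.even_or_odd i with ⟨t, ht⟩ | ⟨t, ht⟩
        · have := chain2 hbip t 0; rw [show (0 : ℕ) + 2 * t = i by omega] at this; omega
        · have := chain2 hbip t 1; rw [show (1 : ℕ) + 2 * t = i by omega] at this; omega
      have hs0 : s = 0 := sumsTo_unique hs ⟨0, fun m _ => hall m, rfl⟩
      subst hs0
      rcases Nat.eq_zero_or_pos (p % 2) with hp | hp
      · -- p even : take a single part 1
        refine ⟨onesf 1, valid_ones 1, ?_, ?_, ?_⟩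
        · refine ⟨1, fun m hm => by simp [onesf]; omega, ?_⟩
          simp only [Finset.range_one, Finset.sum_singleton, onesf, if_pos zero_lt_one]
          omega
        · funext k
          rcases Nat.eq_zero_or_pos k with rfl | hk
          · rw [T4p_prefix (ones_str 1) (ones_lt 1) p (by omega), V_one, hall 0]
            omega
          · rw [T4p_zero (by simp [onesf]; omega) p, hall k]
        · simp [onesf, hall 0, hall 1, cmax, hp]
      · -- p odd : the zero partition
        refine ⟨fun _ => 0, valid_zero, ?_, ?_, ?_⟩
        · refine ⟨0, fun _ _ => rfl, by
            simp only [Finset.range_zero, Finset.sum_empty]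
            omega⟩
        · funext k
          rw [T4p_zero rfl p, hall k]
        · simp [hall 0, hall 1, cmax]
    · -- main case
      set q0 := p % 2 with hq0
      have hq01 : q0 ≤ 1 := by omega
      have hcm := cmax_spec p (l 0) (l 1) h00 (hex 0)
      set c := cmax p (l 0) (l 1) with hcdef
      obtain ⟨hc1, hpat0, hpat1, hpat1e⟩ := hcm
      rw [← hq0] at hpat0 hpat1 hpat1e
      clear_value q0 c
      -- the break point
      obtain ⟨B0, hB0, -⟩ := id hs
      have hPat1pos : 1 ≤ V c 1 q0 := by unfold V; split_ifs <;> omega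
      have hne : ∃ k, 0 < k ∧ l k ≠ V c ((k + p) % 2) q0 := by
        refine ⟨2 * B0 + 1 + q0, by omega, ?_⟩
        rw [hB0 _ (by omega), show (2 * B0 + 1 + q0 + p) % 2 = 1 by omega]
        omega
      set mh := sInf {k | 0 < k ∧ l k ≠ V c ((k + p) % 2) q0} with hmh
      have hmh_mem : 0 < mh ∧ l mh ≠ V c ((mh + p) % 2) q0 := Nat.sInf_mem hne
      have hpre : ∀ k, k < mh → l k = V c ((k + p) % 2) q0 := by
        intro k hk
        rcases Nat.eq_zero_or_pos k with rfl | hk0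
        · rw [show (0 + p) % 2 = q0 by omega]; exact hpat0.symm
        · by_contra h
          have : mh ≤ k := Nat.sInf_le ⟨hk0, h⟩
          omega
      clear_value mh
      -- c even → mh ≥ 2
      have hmh2 : c % 2 = 0 → 2 ≤ mh := by
        intro hce
        by_contra h
        have hm1 : mh = 1 := by omega
        have := hpat1e hce
        rw [hm1] at hmh_mem
        rw [show (1 + p) % 2 = (1 + p) % 2 from rfl] at this
        exact hmh_mem.2 (by rw [← this])
      rcases eq_or_ne c 1 with hc1' | hcbig
      · -- c = 1 : all-ones partition
        have hpre1 : ∀ k, k < mh → l k = (k + p) % 2 := by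
          intro k hk; rw [hpre k hk, hc1', V_one]
        have hbreak : l mh ≠ (mh + p) % 2 := by
          have := hmh_mem.2; rwa [hc1', V_one] at this
        have hstep1 : (mh + p) % 2 = 1 := by
          by_contra h
          have hpar : (mh + p) % 2 = 0 := by omega
          have hge : 1 ≤ l mh := by omega
          rcases lt_or_ge mh 2 with hm2 | hm2
          · have hm1 : mh = 1 := by omega
            rw [hm1] at hpar hge
            -- q0 = 1, l 0 = 1, l 1 ≥ 1, l 1 ≤ l 0 → l 1 = 1 = l 0, contradicting c = 1
            have hq1 : q0 = 1 := by omega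
            have hl0 : l 0 = 1 := by
              have := hpre1 0 (by omega); omega
            have hl1 : l 1 ≤ l 0 := (hex 0).2 (by omega)
            have hl1' : l 1 = 1 := by omega
            have : cmax p (l 0) (l 1) = 2 := by
              unfold cmax; rw [hl0, hl1']; split_ifs <;> omega
            omega
          · have h2 := hbip (mh - 2)
            rw [show mh - 2 + 2 = mh by omega] at h2
            have := hpre1 (mh - 2) (by omega)
            omega
        have hstep2 : l mh = 0 := by
          rcases lt_or_ge mh 2 with hm2 | hm2
          · have hm1 : mh = 1 := by omega
            rw [hm1] at hstep1 hbreak ⊢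
            have hq00 : q0 = 0 := by omega
            have hl0 : l 0 = 0 := by have := hpre1 0 (by omega); omega
            have hl1 : l 1 ≤ l 0 + 2 := (hex 0).1 (by omega)
            have : l 1 ≠ 2 := by
              intro h2
              have : cmax p (l 0) (l 1) = 2 := by
                unfold cmax; rw [hl0, h2]; split_ifs <;> omega
              omega
            omega
          · have h2 := hbip (mh - 2)
            rw [show mh - 2 + 2 = mh by omega] at h2
            have := hpre1 (mh - 2) (by omega)
            omega
        have hstep3 : ∀ k, mh ≤ k → l k = 0 := by
          intro k hk
          rcases Nat.even_or_odd (k - mh) with ⟨t, ht⟩ | ⟨t, ht⟩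
          · have := chain2 hbip t mh
            rw [show mh + 2 * t = k by omega] at this
            omega
          · have hnext : l (mh + 1) ≤ l mh := (hex mh).2 hstep1
            have := chain2 hbip t (mh + 1)
            rw [show mh + 1 + 2 * t = k by omega] at this
            omega
        have hsum : SumsTo l ((mh + q0) / 2) := by
          refine ⟨mh, hstep3, ?_⟩
          rw [Finset.sum_congr rfl (fun k hk => hpre1 k (Finset.mem_range.1 hk)), hq0]
          exact sum_mod2 p mh
        have hseq : s = (mh + q0) / 2 := sumsTo_unique hs hsum
        have hM : 2 * s + 1 - q0 = mh := by omega
        rw [hM]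
        refine ⟨onesf mh, valid_ones mh, ?_, ?_, ?_⟩
        · refine ⟨mh, fun j hj => by simp [onesf]; omega, ?_⟩
          rw [Finset.sum_congr rfl (fun k hk => ones_str mh k (Finset.mem_range.1 hk))]
          simp
        · funext k
          rcases lt_or_ge k mh with hk | hk
          · rw [T4p_prefix (ones_str mh) (ones_lt mh) p hk, V_one, hpre1 k hk]
          · rw [T4p_zero (by simp [onesf]; omega) p, hstep3 k hk]
        · have : onesf mh 0 = 1 := ones_str mh 0 (by omega)
          rw [this]; omega
      · -- c ≥ 2
        have hc2 : 2 ≤ c := by omega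
        set m := if c % 2 = 0 ∧ mh % 2 = 1 then mh - 1 else mh with hmdef
        clear_value m
        have hm_le : m ≤ mh := by rw [hmdef]; split_ifs <;> omega
        have hm_pos : 0 < m := by
          rw [hmdef]; split_ifs with h
          · have := hmh2 h.1; omega
          · exact hmh_mem.1
        have hm_ev : c % 2 = 0 → m % 2 = 0 ∧ 2 ≤ m := by
          intro hce
          have h2 := hmh2 hce
          rw [hmdef]
          split_ifs with h
          · omega
          · simp only [hce, true_and] at h
            omega
        have hprem : ∀ k, k < m → l k = V c ((k + p) % 2) q0 :=
          fun k hk => hpre k (by omega)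
        -- value bounds at the break point(s)
        have hlm_le : ∀ k, k ≤ mh → 2 ≤ k → l k ≤ V c ((k + p) % 2) q0 := by
          intro k hkm hk2
          have h2 := hbip (k - 2)
          rw [show k - 2 + 2 = k by omega] at h2
          have := hpre (k - 2) (by omega)
          rw [show (k - 2 + p) % 2 = (k + p) % 2 by omega] at this
          omega
        have hl1_le : l 1 ≤ V c ((1 + p) % 2) q0 := hpat1
        have hbreak_le : l mh < V c ((mh + p) % 2) q0 := by
          have hne' := hmh_mem.2
          rcases lt_or_ge mh 2 with h | h
          · have hm1 : mh = 1 := by omega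
            rw [hm1] at hne' ⊢
            omega
          · have := hlm_le mh le_rfl h
            omega
        -- the next value of cmax is smaller than c
        have hcnext : cmax (p + m) (l m) (l (m + 1)) < c := by
          by_cases hcase : c % 2 = 0 ∧ mh % 2 = 1
          · -- m = mh - 1, coincidence case
            have hmm : m = mh - 1 := by rw [hmdef, if_pos hcase]
            obtain ⟨hce, hmo⟩ := hcase
            have hmE := (hm_ev hce).1
            have hq0m : (m + p) % 2 = q0 := by omega
            have hlm : l m = V c q0 q0 := by
              have := hpre m (by omega)
              rwa [hq0m] at this
            have hlm1 : l (m + 1) ≠ V c ((1 + p) % 2) q0 := by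
              have : m + 1 = mh := by omega
              rw [this]
              have hpar : (mh + p) % 2 = (1 + p) % 2 := by omega
              rw [← hpar]
              exact hmh_mem.2
            -- q0 = 0 : l m = c/2 - 1, l (m+1) ≠ c/2+1 = l m + 2
            rcases Nat.eq_zero_or_pos q0 with hq | hq
            · have hlm' : l m = c / 2 - 1 := by
                rw [hlm]; unfold V; split_ifs <;> omega
              have hlm1' : l (m + 1) ≠ l m + 2 := by
                intro h
                apply hlm1
                rw [h, hlm']
                unfold V; split_ifs <;> omega
              have hp' : (p + m) % 2 = 0 := by omega
              unfold cmax
              rw [if_pos hp', if_neg hlm1']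
              omega
            · have hq1 : q0 = 1 := by omega
              have hlm' : l m = c / 2 := by
                rw [hlm]; unfold V; split_ifs <;> omega
              have hlm1' : l (m + 1) ≠ l m := by
                intro h
                apply hlm1
                rw [h, hlm']
                unfold V; split_ifs <;> omega
              have hp' : (p + m) % 2 = 1 := by omega
              unfold cmax
              rw [if_neg (by omega), if_neg hlm1']
              have : 1 ≤ c / 2 := by omega
              omega
          · have hmm : m = mh := by rw [hmdef, if_neg hcase]
            have hbr : l m < V c ((m + p) % 2) q0 := by rw [hmm]; exact hbreak_le
            rcases Nat.eq_zero_or_pos ((m + p) % 2) with hpar | hpar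
            · have hb := cmax_le_even (p := p + m) (a := l m) (b := l (m + 1)) (by omega)
              have hq0c : c % 2 = 0 → q0 = 0 := by
                intro hce
                have := (hm_ev hce).1
                omega
              have hV1 : V c ((m + p) % 2) q0 ≤ c / 2 := by
                rw [hpar]
                unfold V; split_ifs <;> omega
              have hV2 : c % 2 = 0 → V c ((m + p) % 2) q0 + 1 ≤ c / 2 := by
                intro hce
                have hq := hq0c hce
                rw [hpar]
                unfold V; split_ifs <;> omega
              omega
            · have hb := cmax_le_odd (p := p + m) (a := l m) (b := l (m + 1)) (by omega)
              have hq0c : c % 2 = 0 → q0 = 1 := by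
                intro hce
                have := (hm_ev hce).1
                omega
              have hpar1 : (m + p) % 2 = 1 := by omega
              have hV1 : V c ((m + p) % 2) q0 ≤ c / 2 + 1 := by
                rw [hpar1]
                unfold V; split_ifs <;> omega
              have hV2 : c % 2 = 0 → V c ((m + p) % 2) q0 ≤ c / 2 := by
                intro hce
                have hq := hq0c hce
                rw [hpar1]
                unfold V; split_ifs <;> omega
              omega
        -- prefix sum of l
        have hP : ∑ k ∈ Finset.range m, l k = ∑ k ∈ Finset.range m, V c ((k + p) % 2) q0 :=
          Finset.sum_congr rfl (fun k hk => hprem k (Finset.mem_range.1 hk))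
        set P := ∑ k ∈ Finset.range m, V c ((k + p) % 2) q0 with hPdef
        clear_value P
        obtain ⟨hPle, hstrip⟩ := sumsTo_strip hs hP
        have hmul : 1 * m ≤ (c / 2) * m := Nat.mul_le_mul_right m (by omega)
        have hPval : (c % 2 = 1 → P = (c / 2) * m + (m + q0) / 2) ∧
            (c % 2 = 0 → P = (c / 2) * m) := by
          constructor
          · intro hco
            rw [hPdef, hq0, sum_V_odd p m hco]
          · intro hce
            rw [hPdef, hq0, sum_V_even p m hce (by omega) (hm_ev hce).1]
        have hP1 : 1 ≤ P := by
          rcases Nat.even_or_odd c with hce | hco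
          · have := hPval.2 (Nat.even_iff.1 hce); omega
          · have := hPval.1 (Nat.odd_iff.1 hco); omega
        -- recursive step on the stripped sequence
        have hbip' : ∀ i, shiftf m l (i + 2) ≤ shiftf m l i := fun i => by
          have := hbip (i + m); simpa [shiftf, Nat.add_right_comm] using this
        have hex' : ∀ i, ((i + (p + m)) % 2 = 0 → shiftf m l (i + 1) ≤ shiftf m l i + 2) ∧
            ((i + (p + m)) % 2 = 1 → shiftf m l (i + 1) ≤ shiftf m l i) := by
          intro i
          constructor
          · intro hpar
            have := (hex (i + m)).1 (by omega)
            simpa [shiftf, Nat.add_right_comm] using this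
          · intro hpar
            have := (hex (i + m)).2 (by omega)
            simpa [shiftf, Nat.add_right_comm] using this
        obtain ⟨ν', hv', hsum', himg', hb'⟩ := ih (s - P) (by omega) (p + m)
          (shiftf m l) hbip' hex' hstrip
        have h0m : shiftf m l 0 = l m := by simp [shiftf]
        have h1m : shiftf m l 1 = l (m + 1) := by simp [shiftf, Nat.add_comm]
        have hν'lt : ∀ i, ν' i < c := by
          intro i
          have h1 : ν' i ≤ ν' 0 := mono hv'.1.2 (Nat.zero_le i)
          rw [h0m, h1m] at hb'
          omega
        set ν := gluef c m ν' with hνdef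
        have Hstr : ∀ j, j < m → ν j = c := gluef_str c m ν'
        have Hlt : ∀ i, ν (m + i) < c := gluef_lt hν'lt
        have hVg : Valid ν := valid_glue hv' hν'lt hm_pos
          (fun hce => Nat.even_iff.2 (hm_ev hce).1)
        have hν0 : ν 0 = c := Hstr 0 hm_pos
        have hshiftν : shiftf m ν = ν' := gluef_shift c m ν'
        -- the image is l
        have himg : T4p p ν = l := by
          funext k
          rcases lt_or_ge k m with hk | hk
          · rw [T4p_prefix Hstr Hlt p hk, ← hq0, hprem k hk]
          · have hk' : k - m + m = k := by omega
            have h1 := T4p_shift Hstr Hlt p (k - m)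
            rw [hk'] at h1
            rw [h1, hshiftν]
            have h2 := congrFun himg' (k - m)
            rw [h2]
            simp only [shiftf]
            rw [hk']
        -- the sum
        have hpreν : ∑ k ∈ Finset.range m, ν k = c * m := by
          rw [Finset.sum_congr rfl (fun k hk => Hstr k (Finset.mem_range.1 hk)),
            Finset.sum_const, Finset.card_range, smul_eq_mul, Nat.mul_comm]
        have hsumν : SumsTo ν (c * m + (2 * (s - P) + 1 - (p + m) % 2)) :=
          sumsTo_concat hpreν (hshiftν ▸ hsum')
        have harith : c * m + (2 * (s - P) + 1 - (p + m) % 2) = 2 * s + 1 - q0 := by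
          rcases Nat.even_or_odd c with hce | hco
          · have hPv := hPval.2 (Nat.even_iff.1 hce)
            have hmE := (hm_ev (Nat.even_iff.1 hce)).1
            have hK : 2 * ((c / 2) * m) = c * m := by
              have h1 : c = 2 * (c / 2) := by
                have := Nat.even_iff.1 hce; omega
              calc 2 * ((c / 2) * m) = (2 * (c / 2)) * m := by ring
                _ = c * m := by rw [← h1]
            set K := (c / 2) * m
            set CM := c * m
            omega
          · have hPv := hPval.1 (Nat.odd_iff.1 hco)
            have hK : 2 * ((c / 2) * m) + m = c * m := by
              have h1 : c = 2 * (c / 2) + 1 := by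
                have := Nat.odd_iff.1 hco; omega
              calc 2 * ((c / 2) * m) + m = (2 * (c / 2) + 1) * m := by ring
                _ = c * m := by rw [← h1]
            set K := (c / 2) * m
            set CM := c * m
            omega
        refine ⟨ν, hVg, ?_, himg, ?_⟩
        · rw [← harith]
          exact hsumν
        · rw [hν0, hcdef]

end ZB

/-- 3.6(a): for odd N, the substitution is a bijection from 'Z¹_N (partitions of N
in which every even positive part occurs an even number of times) onto
BP^{(N-1)/2}_{2,0}. -/
theorem Z1'_bij_BP20 (N : ℕ) (hN : Odd N) :
    Set.BijOn T4
      {ν | IsPartitionSeq ν ∧ SumsTo ν N ∧ EvenPartsEvenMult ν}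
      {l | IsBipartition l ∧ SumsTo l ((N - 1) / 2) ∧ HasExcess 2 0 l} := by
  obtain ⟨t, ht⟩ := hN
  have hT4 : ∀ ν, T4 ν = ZB.T4p 0 ν := fun ν => ZB.T4_eq ν
  refine ⟨?_, ?_, ?_⟩
  · -- MapsTo
    rintro ν ⟨hps, hsum, hem⟩
    have hv : ZB.Valid ν := ⟨hps, hem⟩
    simp only [Set.mem_setOf_eq]
    rw [hT4 ν]
    obtain ⟨⟨B, hB⟩, hdec⟩ := hps
    have hcond := ZB.L1cond hv 0
    refine ⟨⟨⟨B, fun m hm => ZB.T4p_zero (hB m hm) 0⟩, hcond.1⟩, ?_, ?_⟩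
    · have hL1 := ZB.L1sum N 0 ν hv hsum
      have h2 : (N + 0 % 2) / 2 = (N - 1) / 2 := by omega
      rwa [h2] at hL1
    · intro i
      constructor
      · intro hi
        rw [Nat.even_iff] at hi
        exact (hcond.2 i).1 (by omega)
      · intro hi
        rw [Nat.odd_iff] at hi
        have := (hcond.2 i).2 (by omega)
        omega
  · -- InjOn
    rintro ν ⟨hps, hsum, hem⟩ ν' ⟨hps', hsum', hem'⟩ heq
    rw [hT4 ν, hT4 ν'] at heq
    exact ZB.L2 N 0 ν ν' ⟨hps, hem⟩ ⟨hps', hem'⟩ hsum hsum' heq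
  · -- SurjOn
    rintro l ⟨hbip, hsum, hexc⟩
    have hex' : ∀ i, ((i + 0) % 2 = 0 → l (i + 1) ≤ l i + 2) ∧
        ((i + 0) % 2 = 1 → l (i + 1) ≤ l i) := by
      intro i
      constructor
      · intro hi
        have := (hexc i).1 (Nat.even_iff.2 (by omega))
        omega
      · intro hi
        have := (hexc i).2 (Nat.odd_iff.2 (by omega))
        omega
    obtain ⟨ν, hv, hsumν, himg, -⟩ := ZB.L3 ((N - 1) / 2) 0 l hbip.2 hex' hsum
    have hNval : 2 * ((N - 1) / 2) + 1 - 0 % 2 = N := by omega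
    rw [hNval] at hsumν
    exact ⟨ν, ⟨hv.1, hsumν, hv.2⟩, by rw [hT4 ν]; exact himg⟩
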